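/- Let 𝒜 = {a,b,c,d} and let x, y ∈ 𝒜⁺ be positive words such that y is obtained from x by a cyclic block interchange realized by decompositions x' = x_1 x_2 x_3 x_4 and y' = x_1 x_4 x_3 x_2 (where x' and y' are cyclic permutations of x and y respectively). If ν(x) − ν(y) = 6, then this block interchange does not cut a consecutive pair of letters c: for no i ∈ {1,2,3,4} does the block x_i end in the letter c while the cyclically next block x_{i+1 mod 4} begins with the letter c. -/

import Mathlib

/-- `w` is a cyclic block interchange of `v`. -/
def IsCBI {A : Type*} (v w : List A) : Prop :=
  ∃ v' w' : List A, List.IsRotated v' v ∧ List.IsRotated w' w ∧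
    ∃ w1 w2 w3 w4 : List A, v' = w1 ++ w2 ++ w3 ++ w4 ∧ w' = w1 ++ w4 ++ w3 ++ w2

/-- The four-letter alphabet `𝒜 = {a,b,c,d}`. -/
inductive Letter where
  | a | b | c | d
deriving DecidableEq

open Letter

/-- `ν_{xy}(u)`: the number of occurrences of `xy` as a cyclic subword of `u`. -/
def nuPair (p q : Letter) (u : List Letter) : ℕ :=
  (List.range u.length).countP
    (fun i => decide (u[i]? = some p ∧ u[(i + 1) % u.length]? = some q))

/-- The function `ν = ν_{aa} + ν_{bc} + ν_{cd} + ν_{db} − ν_{ac} − ν_{cc} − ν_{dd} −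
ν_{da} − ν_{bb}`. -/
def nu (u : List Letter) : ℤ :=
  (nuPair a a u : ℤ) + nuPair b c u + nuPair c d u + nuPair d b u
    - nuPair a c u - nuPair c c u - nuPair d d u - nuPair d a u - nuPair b b u

/-! ### Auxiliary definitions -/

instance : Fintype Letter :=
  ⟨{a, b, c, d}, by intro x; cases x <;> simp⟩

/-- The weight of a pair of adjacent letters. -/
def F : Letter → Letter → ℤ
  | a, a => 1 | b, c => 1 | c, d => 1 | d, b => 1
  | a, c => -1 | c, c => -1 | d, d => -1 | d, a => -1 | b, b => -1
  | _, _ => 0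

/-- `F` extended by zero to optional letters. -/
def Fo : Option Letter → Option Letter → ℤ
  | some p, some q => F p q
  | _, _ => 0

/-- The linear (non-cyclic) part of `ν`. -/
def nuL : List Letter → ℤ
  | p :: q :: rest => F p q + nuL (q :: rest)
  | _ => 0

/-- Counting occurrences via `countP` and propositional equality. -/
def cnt {α : Type*} [DecidableEq α] (x : α) (l : List α) : ℕ :=
  l.countP (fun y => decide (y = x))

lemma Fo_ge (x y : Option Letter) : -1 ≤ Fo x y := by
  rcases x with _ | x
  · simp [Fo]
  rcases y with _ | y
  · simp [Fo]
  cases x <;> cases y <;> decide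

lemma Fo_le (x y : Option Letter) : Fo x y ≤ 1 := by
  rcases x with _ | x
  · simp [Fo]
  rcases y with _ | y
  · simp [Fo]
  cases x <;> cases y <;> decide

lemma countP_range_getElem {α : Type*} [DecidableEq α] (l : List α) (x : α) :
    (List.range l.length).countP (fun i => decide (l[i]? = some x)) = cnt x l := by
  induction l with
  | nil => simp [cnt]
  | cons h t ih =>
    rw [List.length_cons, List.range_succ_eq_map, List.countP_cons, List.countP_map]
    simp only [Function.comp_def, List.getElem?_cons_succ, List.getElem?_cons_zero]
    have hc : cnt x (h :: t) = cnt x t + (if h = x then 1 else 0) := by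
      simp [cnt, List.countP_cons]
    rw [ih, hc]
    by_cases hx : h = x <;> simp [hx, Nat.add_comm]

lemma nuPair_eq_count (p q : Letter) (u : List Letter) :
    nuPair p q u = cnt (p, q) (u.zip (u.rotate 1)) := by
  have hlen : (u.zip (u.rotate 1)).length = u.length := by simp
  rw [← countP_range_getElem (u.zip (u.rotate 1)) (p, q), hlen, nuPair]
  apply List.countP_congr
  intro i hi
  have hi' : i < u.length := List.mem_range.mp hi
  have h1 : (i + 1) % u.length < u.length := Nat.mod_lt _ (by omega)
  have hiz : i < (u.zip (u.rotate 1)).length := by omega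
  rw [List.getElem?_eq_getElem hi', List.getElem?_eq_getElem h1,
    List.getElem?_eq_getElem hiz, List.getElem_zip, List.getElem_rotate]
  simp [Prod.ext_iff]

lemma sumF_eq (z : List (Letter × Letter)) :
    ((z.map (fun pr => F pr.1 pr.2)).sum : ℤ) =
      (cnt (a, a) z : ℤ) + cnt (b, c) z + cnt (c, d) z + cnt (d, b) z
        - cnt (a, c) z - cnt (c, c) z - cnt (d, d) z - cnt (d, a) z
        - cnt (b, b) z := by
  induction z with
  | nil => simp [cnt]
  | cons hd tl ih =>
    obtain ⟨p, q⟩ := hd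
    simp only [List.map_cons, List.sum_cons, cnt, List.countP_cons] at *
    rw [ih]
    cases p <;> cases q <;> simp [F] <;> push_cast <;> ring

lemma nu_eq_sum (u : List Letter) :
    nu u = ((u.zip (u.rotate 1)).map (fun pr => F pr.1 pr.2)).sum := by
  rw [nu, sumF_eq]
  simp [nuPair_eq_count]

lemma sum_zip_eq (t : List Letter) (h g : Letter) :
    (((h :: t).zip (t ++ [g])).map (fun pr => F pr.1 pr.2)).sum
      = nuL (h :: t) + Fo (h :: t).getLast? (some g) := by
  induction t generalizing h with
  | nil => simp [nuL, Fo]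
  | cons q t' ih =>
    simp only [List.cons_append, List.zip_cons_cons, List.map_cons, List.sum_cons, ih q]
    rw [show nuL (h :: q :: t') = F h q + nuL (q :: t') from by rw [nuL],
      show (h :: q :: t').getLast? = (q :: t').getLast? from by simp [List.getLast?_cons_cons]]
    ring

lemma nu_eq_nuL (u : List Letter) : nu u = nuL u + Fo u.getLast? u.head? := by
  cases u with
  | nil => simp [nu, nuPair, nuL, Fo]
  | cons h t =>
    have hr : (h :: t).rotate 1 = t ++ [h] := by
      rw [show (1 : ℕ) = 0 + 1 from rfl, List.rotate_cons_succ, List.rotate_zero]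
    rw [nu_eq_sum, hr, sum_zip_eq]
    simp

lemma nuL_append (u v : List Letter) :
    nuL (u ++ v) = nuL u + nuL v + Fo u.getLast? v.head? := by
  induction u with
  | nil => simp [nuL, Fo]
  | cons p u' ih =>
    cases u' with
    | nil =>
      cases v with
      | nil => simp [nuL, Fo]
      | cons q v' =>
        simp only [List.nil_append, List.cons_append]
        rw [show nuL (p :: q :: v') = F p q + nuL (q :: v') from by rw [nuL]]
        simp [nuL, Fo]
        ring
    | cons p' u'' =>
      simp only [List.cons_append] at ih ⊢
      rw [show nuL (p :: p' :: (u'' ++ v)) = F p p' + nuL (p' :: (u'' ++ v)) from by rw [nuL],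
        ih, show nuL (p :: p' :: u'') = F p p' + nuL (p' :: u'') from by rw [nuL],
        show (p :: p' :: u'').getLast? = (p' :: u'').getLast? from by
          simp [List.getLast?_cons_cons]]
      ring

lemma nu_rotate_one (l : List Letter) : nu (l.rotate 1) = nu l := by
  cases l with
  | nil => simp
  | cons h t =>
    have hr : (h :: t).rotate 1 = t ++ [h] := by
      rw [show (1 : ℕ) = 0 + 1 from rfl, List.rotate_cons_succ, List.rotate_zero]
    rw [hr, nu_eq_nuL, nu_eq_nuL, nuL_append]
    cases t with
    | nil => simp [nuL, Fo]
    | cons q t' =>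
      rw [show nuL (h :: q :: t') = F h q + nuL (q :: t') from by rw [nuL],
        show (h :: q :: t').getLast? = (q :: t').getLast? from by
          simp [List.getLast?_cons_cons],
        show ((q :: t') ++ [h]).getLast? = some h from by
          rw [List.getLast?_append]; simp]
      simp [nuL, Fo]
      ring

lemma nu_rotate (l : List Letter) (n : ℕ) : nu (l.rotate n) = nu l := by
  induction n with
  | zero => simp
  | succ n ih => rw [← List.rotate_rotate, nu_rotate_one, ih]

lemma nu_isRotated {l l' : List Letter} (h : l.IsRotated l') : nu l = nu l' := by
  obtain ⟨n, rfl⟩ := h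
  exact (nu_rotate l n).symm

/-- The difference of the boundary contributions of the two sides of a block
interchange, as a function of the heads and last letters of the four blocks. -/
def Dx (h1 t1 h2 t2 h3 t3 h4 t4 : Option Letter) : ℤ :=
  (Fo t1 (h2.or (h3.or h4)) + Fo t2 (h3.or h4) + Fo t3 h4
      + Fo (((t4.or t3).or t2).or t1) (h1.or (h2.or (h3.or h4))))
  - (Fo t1 (h4.or (h3.or h2)) + Fo t4 (h3.or h2) + Fo t3 h2
      + Fo (((t2.or t3).or t4).or t1) (h1.or (h4.or (h3.or h2))))

lemma nu_four (w1 w2 w3 w4 : List Letter) :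
    nu (w1 ++ w2 ++ w3 ++ w4) =
      nuL w1 + nuL w2 + nuL w3 + nuL w4
        + Fo w1.getLast? (w2.head?.or (w3.head?.or w4.head?))
        + Fo w2.getLast? (w3.head?.or w4.head?)
        + Fo w3.getLast? w4.head?
        + Fo (((w4.getLast?.or w3.getLast?).or w2.getLast?).or w1.getLast?)
            (w1.head?.or (w2.head?.or (w3.head?.or w4.head?))) := by
  rw [show w1 ++ w2 ++ w3 ++ w4 = w1 ++ (w2 ++ (w3 ++ w4)) from by
    simp [List.append_assoc]]
  rw [nu_eq_nuL, nuL_append, nuL_append, nuL_append]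
  simp only [List.head?_append, List.getLast?_append]
  ring

lemma nu_diff_eq_Dx (w1 w2 w3 w4 : List Letter) :
    nu (w1 ++ w2 ++ w3 ++ w4) - nu (w1 ++ w4 ++ w3 ++ w2) =
      Dx w1.head? w1.getLast? w2.head? w2.getLast? w3.head? w3.getLast?
        w4.head? w4.getLast? := by
  rw [nu_four, nu_four, Dx]
  ring

lemma cut1 : ∀ t3 h4 h3 : Option Letter,
    ¬(Fo t3 h4 = 1 ∧ Fo t3 (some c) = -1
      ∧ Fo (some c) (h4.or (h3.or (some c))) = -1) := by decide

lemma cut2 : ∀ t1 h2 t3 h4 : Option Letter,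
    ¬(Fo t1 (h2.or (some c)) = 1 ∧ Fo t3 h4 = 1
      ∧ Fo t1 (h4.or (some c)) = -1 ∧ Fo t3 h2 = -1) := by decide

lemma cut3 : ∀ t1 h2 h3 : Option Letter,
    ¬(Fo t1 (h2.or (h3.or (some c))) = 1 ∧ Fo t1 (some c) = -1
      ∧ Fo (some c) h2 = -1) := by decide

lemma cut4 : ∀ t1 h2 h3 t3 h4 : Option Letter,
    ¬(Fo t1 (h2.or (h3.or h4)) = 1 ∧ Fo t3 h4 = 1
      ∧ Fo t1 (h4.or (h3.or h2)) = -1 ∧ Fo t3 h2 = -1) := by decide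

lemma keyD (h1 t1 h2 t2 h3 t3 h4 t4 : Option Letter)
    (hD : Dx h1 t1 h2 t2 h3 t3 h4 t4 = 6) :
    ¬(t1 = some c ∧ h2 = some c) ∧ ¬(t2 = some c ∧ h3 = some c) ∧
    ¬(t3 = some c ∧ h4 = some c) ∧ ¬(t4 = some c ∧ h1 = some c) := by
  rw [Dx] at hD
  refine ⟨?_, ?_, ?_, ?_⟩
  · rintro ⟨rfl, rfl⟩
    simp only [Option.some_or] at hD
    rw [show Fo (some c) (some c) = -1 from rfl] at hD
    refine cut1 t3 h4 h3 ⟨?_, ?_, ?_⟩ <;>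
      · have b1 := Fo_ge t2 (h3.or h4); have b2 := Fo_le t2 (h3.or h4)
        have b3 := Fo_ge t3 h4; have b4 := Fo_le t3 h4
        have b5 := Fo_ge (((t4.or t3).or t2).or (some c)) (h1.or (some c))
        have b6 := Fo_le (((t4.or t3).or t2).or (some c)) (h1.or (some c))
        have b7 := Fo_ge (some c) (h4.or (h3.or (some c)))
        have b8 := Fo_le (some c) (h4.or (h3.or (some c)))
        have b9 := Fo_ge t4 (h3.or (some c)); have b10 := Fo_le t4 (h3.or (some c))
        have b11 := Fo_ge t3 (some c); have b12 := Fo_le t3 (some c)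
        have b13 := Fo_ge (((t2.or t3).or t4).or (some c))
          (h1.or (h4.or (h3.or (some c))))
        have b14 := Fo_le (((t2.or t3).or t4).or (some c))
          (h1.or (h4.or (h3.or (some c))))
        omega
  · rintro ⟨rfl, rfl⟩
    simp only [Option.some_or] at hD
    rw [show Fo (some c) (some c) = -1 from rfl] at hD
    refine cut2 t1 h2 t3 h4 ⟨?_, ?_, ?_, ?_⟩ <;>
      · have b1 := Fo_ge t1 (h2.or (some c)); have b2 := Fo_le t1 (h2.or (some c))
        have b3 := Fo_ge t3 h4; have b4 := Fo_le t3 h4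
        have b5 := Fo_ge (((t4.or t3).or (some c)).or t1) (h1.or (h2.or (some c)))
        have b6 := Fo_le (((t4.or t3).or (some c)).or t1) (h1.or (h2.or (some c)))
        have b7 := Fo_ge t1 (h4.or (some c)); have b8 := Fo_le t1 (h4.or (some c))
        have b9 := Fo_ge t4 (some c); have b10 := Fo_le t4 (some c)
        have b11 := Fo_ge t3 h2; have b12 := Fo_le t3 h2
        have b13 := Fo_ge (some c) (h1.or (h4.or (some c)))
        have b14 := Fo_le (some c) (h1.or (h4.or (some c)))
        omega
  · rintro ⟨rfl, rfl⟩
    simp only [Option.some_or] at hD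
    rw [show Fo (some c) (some c) = -1 from rfl] at hD
    refine cut3 t1 h2 h3 ⟨?_, ?_, ?_⟩ <;>
      · have b1 := Fo_ge t1 (h2.or (h3.or (some c)))
        have b2 := Fo_le t1 (h2.or (h3.or (some c)))
        have b3 := Fo_ge t2 (h3.or (some c)); have b4 := Fo_le t2 (h3.or (some c))
        have b5 := Fo_ge (((t4.or (some c)).or t2).or t1)
          (h1.or (h2.or (h3.or (some c))))
        have b6 := Fo_le (((t4.or (some c)).or t2).or t1)
          (h1.or (h2.or (h3.or (some c))))
        have b7 := Fo_ge t1 (some c); have b8 := Fo_le t1 (some c)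
        have b9 := Fo_ge t4 (h3.or h2); have b10 := Fo_le t4 (h3.or h2)
        have b11 := Fo_ge (some c) h2; have b12 := Fo_le (some c) h2
        have b13 := Fo_ge (((t2.or (some c)).or t4).or t1) (h1.or (some c))
        have b14 := Fo_le (((t2.or (some c)).or t4).or t1) (h1.or (some c))
        omega
  · rintro ⟨rfl, rfl⟩
    simp only [Option.some_or] at hD
    rw [show Fo (some c) (some c) = -1 from rfl] at hD
    refine cut4 t1 h2 h3 t3 h4 ⟨?_, ?_, ?_, ?_⟩ <;>
      · have b1 := Fo_ge t1 (h2.or (h3.or h4)); have b2 := Fo_le t1 (h2.or (h3.or h4))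
        have b3 := Fo_ge t2 (h3.or h4); have b4 := Fo_le t2 (h3.or h4)
        have b5 := Fo_ge t3 h4; have b6 := Fo_le t3 h4
        have b7 := Fo_ge t1 (h4.or (h3.or h2)); have b8 := Fo_le t1 (h4.or (h3.or h2))
        have b9 := Fo_ge (some c) (h3.or h2); have b10 := Fo_le (some c) (h3.or h2)
        have b11 := Fo_ge t3 h2; have b12 := Fo_le t3 h2
        have b13 := Fo_ge (((t2.or t3).or (some c)).or t1) (some c)
        have b14 := Fo_le (((t2.or t3).or (some c)).or t1) (some c)
        omega

/-- If `y` is obtained from `x` by a cyclic block interchange realized by decompositions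
`x' = x₁x₂x₃x₄` and `y' = x₁x₄x₃x₂` (with `x', y'` cyclic permutations of `x, y`), and
`ν(x) − ν(y) = 6`, then the interchange does not cut a consecutive pair of letters `c`:
no block ends in `c` while the cyclically next block begins with `c`. -/
theorem nu_six_no_cc_cut (x y x' y' x1 x2 x3 x4 : List Letter)
    (hx : List.IsRotated x' x) (hy : List.IsRotated y' y)
    (hx' : x' = x1 ++ x2 ++ x3 ++ x4) (hy' : y' = x1 ++ x4 ++ x3 ++ x2)
    (h6 : nu x - nu y = 6) :
    ¬ (x1.getLast? = some c ∧ x2.head? = some c) ∧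
    ¬ (x2.getLast? = some c ∧ x3.head? = some c) ∧
    ¬ (x3.getLast? = some c ∧ x4.head? = some c) ∧
    ¬ (x4.getLast? = some c ∧ x1.head? = some c) := by
  have hxe : nu x = nu (x1 ++ x2 ++ x3 ++ x4) := by
    rw [← hx', nu_isRotated hx.symm]
  have hye : nu y = nu (x1 ++ x4 ++ x3 ++ x2) := by
    rw [← hy', nu_isRotated hy.symm]
  rw [hxe, hye, nu_diff_eq_Dx] at h6
  exact keyD _ _ _ _ _ _ _ _ h6
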